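/- If F(x,y) = (a x² + 2b x y + c y²)/2 + (d x + e y)/2 + f is a quadratic packing polynomial (a bijection from ℕ² to ℕ), then the quadratic form Q(x,y) = (a x² + 2b x y + c y²)/2 satisfies Q(x,y) > 0 for all (x,y) ∈ ℕ² with (x,y) ≠ (0,0). -/

import Mathlib

open Finset

private lemma harmonic_unbounded (C : ℚ) :
    ∃ M : ℕ, C < ∑ m ∈ Finset.range M, (1 / (m + 1) : ℚ) := by
  have h := Real.tendsto_sum_range_one_div_nat_succ_atTop
  rw [Filter.tendsto_atTop] at h
  obtain ⟨M, hM⟩ := (h ((C : ℝ) + 1)).exists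
  refine ⟨M, ?_⟩
  have h1 : (C : ℝ) < ∑ m ∈ Finset.range M, (1 / (m + 1) : ℝ) := by linarith
  have hcast : ((∑ m ∈ Finset.range M, (1 / (m + 1) : ℚ) : ℚ) : ℝ)
      = ∑ m ∈ Finset.range M, (1 / (m + 1) : ℝ) := by push_cast; ring
  rw [← hcast] at h1
  exact_mod_cast h1

private lemma slope_pos (F : ℕ × ℕ → ℚ) (hmaps : ∀ p, ∃ n : ℕ, F p = n)
    (hinj : Function.Injective F) (g : ℕ → ℕ × ℕ) (hg : Function.Injective g)
    (σ γ : ℚ) (hlin : ∀ t : ℕ, F (g t) = σ * t + γ) : 0 < σ := by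
  have hnonneg : ∀ t : ℕ, 0 ≤ σ * t + γ := by
    intro t
    obtain ⟨n, hn⟩ := hmaps (g t)
    have h := hlin t
    rw [hn] at h
    rw [← h]; positivity
  rcases lt_trichotomy σ 0 with h | h | h
  · obtain ⟨t, ht⟩ := exists_nat_gt (γ / (-σ))
    have h1 := hnonneg t
    have h2 : γ < (t : ℚ) * (-σ) := by
      rwa [div_lt_iff₀ (by linarith)] at ht
    nlinarith
  · have h01 : F (g 0) = F (g 1) := by rw [hlin, hlin, h]; ring
    have := hg (hinj h01)
    simp at this
  · exact h

private lemma count_lemma (F : ℕ × ℕ → ℚ) (hmaps : ∀ p, ∃ n : ℕ, F p = n)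
    (hinj : Function.Injective F) (K : ℕ) (g : Fin K → ℕ → ℕ × ℕ)
    (hg : ∀ i t i' t', g i t = g i' t' → i = i' ∧ t = t')
    (σ γ : Fin K → ℚ) (hσ : ∀ i, 0 < σ i)
    (hlin : ∀ i t, F (g i t) = σ i * t + γ i) :
    ∑ i, (σ i)⁻¹ ≤ 1 := by
  by_contra hlt
  push_neg at hlt
  rcases Nat.eq_zero_or_pos K with hK | hK
  · subst hK; simp at hlt; linarith
  have hNe : Nonempty (Fin K) := ⟨⟨0, hK⟩⟩
  set S : ℚ := ∑ i, (σ i)⁻¹ with hS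
  set Γ : ℚ := ∑ i, |γ i| with hΓ
  set D : ℚ := ∑ i, γ i / σ i with hD
  obtain ⟨N, hN⟩ := exists_nat_gt (max Γ ((1 + |D|) / (S - 1)))
  have hSpos : 0 < S - 1 := by linarith
  have hN1 : ∀ i : Fin K, γ i ≤ N := by
    intro i
    have h1 : |γ i| ≤ Γ :=
      Finset.single_le_sum (f := fun i => |γ i|) (fun i _ => abs_nonneg _) (Finset.mem_univ i)
    have h2 : Γ < N := lt_of_le_of_lt (le_max_left _ _) hN
    linarith [le_abs_self (γ i)]
  have hN2 : 1 + |D| < N * (S - 1) := by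
    have h1 : (1 + |D|) / (S - 1) < N := lt_of_le_of_lt (le_max_right _ _) hN
    calc 1 + |D| = ((1 + |D|) / (S - 1)) * (S - 1) := by field_simp
      _ < N * (S - 1) := by exact mul_lt_mul_of_pos_right h1 hSpos
  set T : Fin K → ℕ := fun i => ⌊((N : ℚ) - γ i) / σ i⌋₊ + 1 with hT
  have hTlb : ∀ i, ((N : ℚ) - γ i) / σ i < T i := by
    intro i
    have := Nat.lt_floor_add_one (((N : ℚ) - γ i) / σ i)
    rw [hT]
    push_cast
    exact this
  have hTmem : ∀ i, ∀ t : ℕ, t < T i → σ i * t + γ i ≤ N := by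
    intro i t ht
    have h0 : (0:ℚ) ≤ ((N : ℚ) - γ i) / σ i :=
      div_nonneg (by linarith [hN1 i]) (le_of_lt (hσ i))
    have ht' : (t : ℚ) ≤ ((N : ℚ) - γ i) / σ i := by
      have h3 : t ≤ ⌊((N : ℚ) - γ i) / σ i⌋₊ := Nat.lt_succ_iff.mp ht
      calc (t:ℚ) ≤ (⌊((N : ℚ) - γ i) / σ i⌋₊ : ℚ) := by exact_mod_cast h3
        _ ≤ _ := Nat.floor_le h0
    have h4 : (t:ℚ) * σ i ≤ (N : ℚ) - γ i := (le_div_iff₀ (hσ i)).mp ht'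
    linarith
  choose nF hnF using hmaps
  have hcard : ∑ i, T i ≤ N + 1 := by
    classical
    have hc : (Finset.univ.sigma (fun i => Finset.range (T i))).card
        ≤ (Finset.range (N+1)).card := by
      apply Finset.card_le_card_of_injOn (fun q => nF (g q.1 q.2))
      · rintro ⟨i, t⟩ hq
        simp only [Finset.mem_coe, Finset.mem_sigma, Finset.mem_range, Finset.mem_univ, true_and] at hq ⊢
        have h1 := hnF (g i t)
        have h2 := hlin i t
        have h3 : (nF (g i t) : ℚ) ≤ N := by
          rw [h1] at h2
          rw [h2]
          exact hTmem i t hq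
        exact Nat.lt_succ_of_le (by exact_mod_cast h3)
      · rintro ⟨i, t⟩ hq ⟨i', t'⟩ hq' heq
        simp only at heq
        have h1 : F (g i t) = F (g i' t') := by rw [hnF, hnF, heq]
        obtain ⟨h4, h5⟩ := hg _ _ _ _ (hinj h1)
        subst h4; subst h5; rfl
    simpa [Finset.card_sigma, Finset.card_range] using hc
  have hlb : ∑ i : Fin K, ((N:ℚ) - γ i)/σ i < ∑ i : Fin K, (T i : ℚ) := by
    apply Finset.sum_lt_sum_of_nonempty Finset.univ_nonempty
    intro i _
    exact hTlb i
  have heq : ∑ i : Fin K, ((N:ℚ) - γ i)/σ i = (N:ℚ) * S - D := by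
    calc ∑ i : Fin K, ((N:ℚ) - γ i)/σ i
        = ∑ i : Fin K, ((N:ℚ) * (σ i)⁻¹ - γ i / σ i) := by
          apply Finset.sum_congr rfl; intro i _; rw [sub_div, div_eq_mul_inv]
      _ = (N:ℚ) * S - D := by rw [Finset.sum_sub_distrib, ← Finset.mul_sum]
  have hcast : (∑ i : Fin K, (T i : ℚ)) ≤ (N : ℚ) + 1 := by exact_mod_cast hcard
  have hexp : (N:ℚ) * (S - 1) = N * S - N := by ring
  linarith [le_abs_self D, heq ▸ hlb]

private lemma a_nonzero (a c f : ℕ) (b d e : ℤ) (F : ℕ × ℕ → ℚ)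
    (hF : ∀ x y : ℕ, F (x, y) =
      ((a : ℚ) * x ^ 2 + 2 * (b : ℚ) * x * y + (c : ℚ) * y ^ 2) / 2
        + ((d : ℚ) * x + (e : ℚ) * y) / 2 + (f : ℚ))
    (hmaps : ∀ p, ∃ n : ℕ, F p = n) (hinj : Function.Injective F) : a ≠ 0 := by
  intro ha
  subst ha
  have hslope : ∀ m : ℕ, 0 < (b : ℚ) * m + (d : ℚ) / 2 := by
    intro m
    apply slope_pos F hmaps hinj (fun t => (t, m))
      (fun t t' h => by simpa using h) _ (((c:ℚ) * m ^ 2 + (e:ℚ) * m) / 2 + f)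
    intro t
    rw [hF]
    push_cast
    ring
  have hd : (0:ℚ) < (d:ℚ) / 2 := by simpa using hslope 0
  have hb : (0:ℚ) ≤ (b:ℚ) := by
    by_contra hb
    push_neg at hb
    obtain ⟨m, hm⟩ := exists_nat_gt (((d:ℚ)/2) / (-(b:ℚ)))
    have h1 := hslope m
    have h2 : (d:ℚ)/2 < (m:ℚ) * (-(b:ℚ)) := by
      rwa [div_lt_iff₀ (by linarith)] at hm
    nlinarith
  have hBpos : (0:ℚ) < (b:ℚ) + (d:ℚ)/2 := by linarith
  obtain ⟨M, hM⟩ := harmonic_unbounded ((b:ℚ) + (d:ℚ)/2)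
  have hcount := count_lemma F hmaps hinj M (fun i t => (t, (i:ℕ)))
      (fun i t i' t' h => by
        simp only [Prod.mk.injEq] at h
        exact ⟨Fin.ext h.2, h.1⟩)
      (fun i => (b:ℚ) * (i:ℕ) + (d:ℚ)/2)
      (fun i => ((c:ℚ) * (i:ℕ) ^ 2 + (e:ℚ) * (i:ℕ)) / 2 + f)
      (fun i => hslope i)
      (fun i t => by rw [hF]; push_cast; ring)
  have key : ∀ i : Fin M,
      ((b:ℚ) + (d:ℚ)/2)⁻¹ * (1 / ((i:ℕ) + 1)) ≤ ((b:ℚ) * (i:ℕ) + (d:ℚ)/2)⁻¹ := by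
    intro i
    have hile : (b:ℚ) * (i:ℕ) + (d:ℚ)/2 ≤ ((b:ℚ) + (d:ℚ)/2) * ((i:ℕ) + 1) := by
      have h0 : (0:ℚ) ≤ (d:ℚ)/2 * (i:ℕ) := by positivity
      nlinarith
    have h2 : (0:ℚ) < ((b:ℚ) + (d:ℚ)/2) * ((i:ℕ) + 1) := by positivity
    have h3 := one_div_le_one_div_of_le (hslope i) hile
    rw [one_div, one_div, mul_inv] at h3
    simpa [one_div] using h3
  have hsum : ((b:ℚ) + (d:ℚ)/2)⁻¹ * ∑ m ∈ Finset.range M, (1 / (m + 1) : ℚ)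
      ≤ ∑ i : Fin M, ((b:ℚ) * (i:ℕ) + (d:ℚ)/2)⁻¹ := by
    rw [Finset.mul_sum, ← Fin.sum_univ_eq_sum_range (fun m => ((b:ℚ)+(d:ℚ)/2)⁻¹ * (1/((m:ℚ)+1)))]
    exact Finset.sum_le_sum (fun i _ => key i)
  have hgt : (1:ℚ) < ((b:ℚ) + (d:ℚ)/2)⁻¹ * ∑ m ∈ Finset.range M, (1 / (m + 1) : ℚ) := by
    have := mul_lt_mul_of_pos_left hM (inv_pos.mpr hBpos)
    rwa [inv_mul_cancel₀ (ne_of_gt hBpos)] at this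
  linarith

theorem packing_quadratic_form_posdef
    (a c f : ℕ) (b d e : ℤ) (hquad : ¬ (a = 0 ∧ b = 0 ∧ c = 0))
    (had : (a : ℤ) % 2 = d % 2) (hce : (c : ℤ) % 2 = e % 2)
    (F : ℕ × ℕ → ℚ)
    (hF : ∀ p : ℕ × ℕ, F p =
      ((a : ℚ) * p.1 ^ 2 + 2 * (b : ℚ) * p.1 * p.2 + (c : ℚ) * p.2 ^ 2) / 2
        + ((d : ℚ) * p.1 + (e : ℚ) * p.2) / 2 + (f : ℚ))
    (hmaps : ∀ p : ℕ × ℕ, ∃ n : ℕ, F p = n)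
    (hbij : ∀ n : ℕ, ∃! p : ℕ × ℕ, F p = n) :
    ∀ p : ℕ × ℕ, p ≠ (0, 0) →
      0 < ((a : ℚ) * p.1 ^ 2 + 2 * (b : ℚ) * p.1 * p.2 + (c : ℚ) * p.2 ^ 2) / 2 := by
  have hinj : Function.Injective F := by
    intro p q h
    obtain ⟨n, hn⟩ := hmaps p
    obtain ⟨r, hr, hu⟩ := hbij n
    have hq : F q = n := by rw [← h, hn]
    rw [hu p hn, hu q hq]
  have hF2 : ∀ x y : ℕ, F (x, y) =
      ((a : ℚ) * x ^ 2 + 2 * (b : ℚ) * x * y + (c : ℚ) * y ^ 2) / 2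
        + ((d : ℚ) * x + (e : ℚ) * y) / 2 + (f : ℚ) := fun x y => hF (x, y)
  rintro ⟨x, y⟩ hp
  show 0 < ((a : ℚ) * x ^ 2 + 2 * (b : ℚ) * x * y + (c : ℚ) * y ^ 2) / 2
  -- nonnegativity
  have hQnn : 0 ≤ ((a : ℚ) * x ^ 2 + 2 * (b : ℚ) * x * y + (c : ℚ) * y ^ 2) / 2 := by
    by_contra hneg
    push_neg at hneg
    set Qv : ℚ := ((a : ℚ) * x ^ 2 + 2 * (b : ℚ) * x * y + (c : ℚ) * y ^ 2) / 2 with hQv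
    set L : ℚ := ((d : ℚ) * x + (e : ℚ) * y) / 2 with hL
    have hFt : ∀ t : ℕ, F (t * x, t * y) = Qv * t ^ 2 + L * t + f := by
      intro t
      rw [hF2, hQv, hL]
      push_cast
      ring
    obtain ⟨t, ht⟩ := exists_nat_gt (max 1 ((|L| + f + 1) / (-Qv)))
    have ht1 : (1:ℚ) < t := lt_of_le_of_lt (le_max_left _ _) ht
    have ht2 : (|L| + f + 1) / (-Qv) < t := lt_of_le_of_lt (le_max_right _ _) ht
    have ht3 : |L| + f + 1 < t * (-Qv) := by
      rwa [div_lt_iff₀ (by linarith)] at ht2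
    have h0 : 0 ≤ F (t * x, t * y) := by
      obtain ⟨n, hn⟩ := hmaps (t * x, t * y)
      rw [hn]; positivity
    rw [hFt t] at h0
    have hLabs : L ≤ |L| := le_abs_self L
    have habs : 0 ≤ |L| := abs_nonneg L
    have hfnn : (0:ℚ) ≤ f := by positivity
    nlinarith [mul_lt_mul_of_pos_left ht3 (show (0:ℚ) < t by linarith)]
  -- nonzero
  have hQne : ((a : ℚ) * x ^ 2 + 2 * (b : ℚ) * x * y + (c : ℚ) * y ^ 2) / 2 ≠ 0 := by
    intro hQ0
    have hQ : (a:ℚ) * x ^ 2 + 2 * (b:ℚ) * x * y + (c:ℚ) * y ^ 2 = 0 := by linarith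
    have hane := a_nonzero a c f b d e F hF2 hmaps hinj
    have hcne : c ≠ 0 := by
      apply a_nonzero c a f b e d (fun p => F (p.2, p.1)) ?_ (fun p => hmaps _) ?_
      · intro x' y'
        show F (y', x') = _
        rw [hF2]
        push_cast
        ring
      · intro p q h
        have h2 := hinj h
        exact Prod.ext (congrArg Prod.snd h2) (congrArg Prod.fst h2)
    have hx : x ≠ 0 := by
      rintro rfl
      have hy : y ≠ 0 := fun hy => hp (by simp [hy])
      have h1 : (c:ℚ) * y ^ 2 = 0 := by
        have := hQ; push_cast at this ⊢; linarith
      rcases mul_eq_zero.mp h1 with h2 | h2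
      · exact hcne (by exact_mod_cast h2)
      · exact hy (by exact_mod_cast pow_eq_zero_iff (n := 2) (by norm_num) |>.mp h2)
    have hy : y ≠ 0 := by
      rintro rfl
      have h1 : (a:ℚ) * x ^ 2 = 0 := by
        have := hQ; push_cast at this ⊢; linarith
      rcases mul_eq_zero.mp h1 with h2 | h2
      · exact hane (by exact_mod_cast h2)
      · exact hx (by exact_mod_cast pow_eq_zero_iff (n := 2) (by norm_num) |>.mp h2)
    have hxq : (0:ℚ) < x := by
      have := Nat.pos_of_ne_zero hx; exact_mod_cast this
    have hyq : (0:ℚ) < y := by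
      have := Nat.pos_of_ne_zero hy; exact_mod_cast this
    -- slopes along shifted rays
    have hsα : ∀ m : ℕ, 0 < ((d:ℚ) * x + (e:ℚ) * y) / 2 + m * ((a:ℚ) * x + (b:ℚ) * y) := by
      intro m
      apply slope_pos F hmaps hinj (fun t => (m + t * x, t * y)) ?_ _
        (((a:ℚ) * m ^ 2 + (d:ℚ) * m) / 2 + f)
      · intro t
        rw [hF2]
        push_cast
        linear_combination ((t:ℚ) ^ 2 / 2) * hQ
      · intro t t' h
        simp only [Prod.mk.injEq] at h
        exact Nat.eq_of_mul_eq_mul_right (Nat.pos_of_ne_zero hy) h.2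
    have hsβ : ∀ m : ℕ, 0 < ((d:ℚ) * x + (e:ℚ) * y) / 2 + m * ((b:ℚ) * x + (c:ℚ) * y) := by
      intro m
      apply slope_pos F hmaps hinj (fun t => (t * x, m + t * y)) ?_ _
        (((c:ℚ) * m ^ 2 + (e:ℚ) * m) / 2 + f)
      · intro t
        rw [hF2]
        push_cast
        linear_combination ((t:ℚ) ^ 2 / 2) * hQ
      · intro t t' h
        simp only [Prod.mk.injEq] at h
        exact Nat.eq_of_mul_eq_mul_right (Nat.pos_of_ne_zero hx) h.1
    have hL : 0 < ((d:ℚ) * x + (e:ℚ) * y) / 2 := by simpa using hsα 0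
    have hα : 0 ≤ (a:ℚ) * x + (b:ℚ) * y := by
      by_contra hc
      push_neg at hc
      obtain ⟨m, hm⟩ := exists_nat_gt ((((d:ℚ) * x + (e:ℚ) * y) / 2) / (-((a:ℚ) * x + (b:ℚ) * y)))
      have h1 := hsα m
      have h2 : ((d:ℚ) * x + (e:ℚ) * y) / 2 < (m:ℚ) * (-((a:ℚ) * x + (b:ℚ) * y)) := by
        rwa [div_lt_iff₀ (by linarith)] at hm
      nlinarith
    have hβ : 0 ≤ (b:ℚ) * x + (c:ℚ) * y := by
      by_contra hc
      push_neg at hc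
      obtain ⟨m, hm⟩ := exists_nat_gt ((((d:ℚ) * x + (e:ℚ) * y) / 2) / (-((b:ℚ) * x + (c:ℚ) * y)))
      have h1 := hsβ m
      have h2 : ((d:ℚ) * x + (e:ℚ) * y) / 2 < (m:ℚ) * (-((b:ℚ) * x + (c:ℚ) * y)) := by
        rwa [div_lt_iff₀ (by linarith)] at hm
      nlinarith
    have hα0 : (a:ℚ) * x + (b:ℚ) * y = 0 := by
      have hsum : (x:ℚ) * ((a:ℚ) * x + (b:ℚ) * y) + (y:ℚ) * ((b:ℚ) * x + (c:ℚ) * y) = 0 := by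
        linear_combination hQ
      have h1 : 0 ≤ (x:ℚ) * ((a:ℚ) * x + (b:ℚ) * y) := mul_nonneg (le_of_lt hxq) hα
      have h2 : 0 ≤ (y:ℚ) * ((b:ℚ) * x + (c:ℚ) * y) := mul_nonneg (le_of_lt hyq) hβ
      have h3 : (x:ℚ) * ((a:ℚ) * x + (b:ℚ) * y) = 0 := by linarith
      rcases mul_eq_zero.mp h3 with h4 | h4
      · linarith
      · exact h4
    -- counting contradiction with equal slopes
    set K : ℕ := ⌊((d:ℚ) * x + (e:ℚ) * y) / 2⌋₊ + 1 with hK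
    have hKL : ((d:ℚ) * x + (e:ℚ) * y) / 2 < K := by
      have := Nat.lt_floor_add_one (((d:ℚ) * x + (e:ℚ) * y) / 2)
      rw [hK]; push_cast; exact this
    have hcount := count_lemma F hmaps hinj K (fun s t => ((s:ℕ) + t * x, t * y))
        (fun s t s' t' h => by
          simp only [Prod.mk.injEq] at h
          have ht : t = t' := Nat.eq_of_mul_eq_mul_right (Nat.pos_of_ne_zero hy) h.2
          subst ht
          exact ⟨Fin.ext (by omega), rfl⟩)
        (fun _ => ((d:ℚ) * x + (e:ℚ) * y) / 2)
        (fun s => ((a:ℚ) * (s:ℕ) ^ 2 + (d:ℚ) * (s:ℕ)) / 2 + f)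
        (fun _ => hL)
        (fun s t => by
          rw [hF2]
          push_cast
          linear_combination ((t:ℚ) ^ 2 / 2) * hQ + ((t:ℚ) * ((s:ℕ):ℚ)) * hα0)
    rw [Finset.sum_const, Finset.card_univ, Fintype.card_fin, nsmul_eq_mul] at hcount
    have h5 := mul_le_mul_of_nonneg_right hcount (le_of_lt hL)
    rw [one_mul, mul_assoc, inv_mul_cancel₀ (ne_of_gt hL), mul_one] at h5
    linarith
  exact lt_of_le_of_ne hQnn (Ne.symm hQne)
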